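/- Let Ω ⊂ ℝ^N be bounded open, f ∈ H^{-1}(Ω), and let 𝔄_ad be a set of admissible matrices A = A_sym + A_skew with uniformly elliptic symmetric parts (α I ≤ A_sym ≤ β I a.e.). Suppose A_k ∈ 𝔄_ad with A_k^{skew} ∈ L^∞(Ω; Skew_N), A_k → A₀ strongly in L²(Ω; ℝ^{N×N}), and let y_k ∈ H¹₀(Ω) be the (unique) weak solutions of −div(A_k∇y_k) = f. Then {y_k} is bounded in H¹₀(Ω), and any weak H¹₀-limit ŷ of a subsequence satisfies: (A₀, ŷ) solves the limit equation, i.e., ∫_Ω (∇φ, A₀∇ŷ) dx = ⟨f, φ⟩ for all φ ∈ C^∞_c(Ω). -/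

import Mathlib

open MeasureTheory Filter Set Matrix
open scoped Topology ENNReal

noncomputable section

/-- `i`-th partial derivative of a scalar function on `ℝ^N`. -/
def pd {N : ℕ} (i : Fin N) (φ : (Fin N → ℝ) → ℝ) (x : Fin N → ℝ) : ℝ :=
  fderiv ℝ φ x (Pi.single i 1)

/-- Gradient vector field of a scalar function on `ℝ^N`. -/
def gradv {N : ℕ} (φ : (Fin N → ℝ) → ℝ) (x : Fin N → ℝ) : Fin N → ℝ :=
  fun i => pd i φ x

/-- Smooth test functions compactly supported in `Ω`. -/
def TestFun {N : ℕ} (Ω : Set (Fin N → ℝ)) (φ : (Fin N → ℝ) → ℝ) : Prop :=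
  ContDiff ℝ (⊤ : ℕ∞) φ ∧ HasCompactSupport φ ∧ tsupport φ ⊆ Ω

/-- Membership in `H¹₀(Ω)`: `v ∈ L²(Ω)` with (weak) gradient `g ∈ L²(Ω;ℝ^N)`,
approximable by smooth compactly supported functions in the `H¹`-norm. -/
def MemH10 {N : ℕ} (Ω : Set (Fin N → ℝ)) (v : (Fin N → ℝ) → ℝ)
    (g : (Fin N → ℝ) → Fin N → ℝ) : Prop :=
  MemLp v 2 (volume.restrict Ω) ∧ (∀ i, MemLp (fun x => g x i) 2 (volume.restrict Ω)) ∧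
  ∃ φ : ℕ → (Fin N → ℝ) → ℝ, (∀ k, TestFun Ω (φ k)) ∧
    Filter.Tendsto
      (fun k => ∫ x in Ω, ((φ k x - v x) ^ 2 + ∑ i, (pd i (φ k) x - g x i) ^ 2))
      Filter.atTop (nhds 0)

section Helpers

variable {X : Type*} [MeasurableSpace X] {μ : Measure X} {N : ℕ}

lemma memL1_mul {f g : X → ℝ} (hf : MemLp f 2 μ) (hg : MemLp g 2 μ) :
    Integrable (fun x => f x * g x) μ := by
  have h : (1 : ℝ≥0∞) / 1 = 1 / 2 + 1 / 2 := by
    rw [ENNReal.div_add_div_same]; norm_num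
    rw [ENNReal.div_self (by norm_num) (by norm_num)]
  have := hg.smul (φ := f) (r := 1) hf
  rw [memLp_one_iff_integrable] at this
  exact this

lemma cs_mul {f g : X → ℝ} (hf : MemLp f 2 μ) (hg : MemLp g 2 μ) :
    ∫ x, |f x * g x| ∂μ ≤ Real.sqrt (∫ x, f x ^ 2 ∂μ) * Real.sqrt (∫ x, g x ^ 2 ∂μ) := by
  have hpq : Real.HolderConjugate 2 2 := Real.HolderConjugate.two_two
  have h2 : ENNReal.ofReal (2:ℝ) = 2 := by simp
  have H := integral_mul_norm_le_Lp_mul_Lq (μ := μ) (f := f) (g := g) hpq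
    (by rwa [h2]) (by rwa [h2])
  have e1 : ∀ x, |f x * g x| = ‖f x‖ * ‖g x‖ := by
    intro x; rw [abs_mul]; rfl
  have e2 : ∀ h : X → ℝ, ∀ x, ‖h x‖ ^ (2:ℝ) = h x ^ 2 := by
    intro h x
    rw [show ((2:ℝ)) = ((2:ℕ):ℝ) by norm_num, Real.rpow_natCast]
    rw [Real.norm_eq_abs, sq_abs]
  simp only [e1, e2 f, e2 g] at H ⊢
  calc ∫ x, ‖f x‖ * ‖g x‖ ∂μ ≤ (∫ x, f x ^ 2 ∂μ) ^ (1/2:ℝ) * (∫ x, g x ^ 2 ∂μ) ^ (1/2:ℝ) := H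
    _ = _ := by rw [← Real.sqrt_eq_rpow, ← Real.sqrt_eq_rpow]

lemma cs_mul_abs {f g : X → ℝ} (hf : MemLp f 2 μ) (hg : MemLp g 2 μ) :
    |∫ x, f x * g x ∂μ| ≤ Real.sqrt (∫ x, f x ^ 2 ∂μ) * Real.sqrt (∫ x, g x ^ 2 ∂μ) := by
  refine le_trans ?_ (cs_mul hf hg)
  have := norm_integral_le_integral_norm (μ := μ) (f := fun x => f x * g x)
  simpa [Real.norm_eq_abs, abs_mul] using this

lemma memL2_sqrt_sqsum {F : X → Fin N → ℝ} (hF : ∀ i, MemLp (fun x => F x i) 2 μ) :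
    MemLp (fun x => Real.sqrt (∑ i, F x i ^ 2)) 2 μ := by
  have hsm : AEStronglyMeasurable (fun x => ∑ i, F x i ^ 2) μ :=
    Finset.aestronglyMeasurable_fun_sum _ (fun i _ => ((hF i).1.mul (hF i).1).congr
      (by filter_upwards with x; simp [sq, Pi.mul_apply]))
  have hsm2 : AEStronglyMeasurable (fun x => Real.sqrt (∑ i, F x i ^ 2)) μ :=
    Real.continuous_sqrt.comp_aestronglyMeasurable hsm
  rw [memLp_two_iff_integrable_sq hsm2]
  have : (fun x => Real.sqrt (∑ i, F x i ^ 2) ^ 2) = fun x => ∑ i, F x i ^ 2 := by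
    funext x
    exact Real.sq_sqrt (Finset.sum_nonneg fun i _ => sq_nonneg _)
  rw [this]
  exact integrable_finset_sum _ fun i _ => (hF i).integrable_sq

lemma integrable_dot {F G : X → Fin N → ℝ} (hF : ∀ i, MemLp (fun x => F x i) 2 μ)
    (hG : ∀ i, MemLp (fun x => G x i) 2 μ) :
    Integrable (fun x => F x ⬝ᵥ G x) μ := by
  simp only [dotProduct]
  exact integrable_finset_sum _ fun i _ => memL1_mul (hF i) (hG i)

lemma cs_dot {F G : X → Fin N → ℝ} (hF : ∀ i, MemLp (fun x => F x i) 2 μ)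
    (hG : ∀ i, MemLp (fun x => G x i) 2 μ) :
    |∫ x, F x ⬝ᵥ G x ∂μ| ≤
      Real.sqrt (∫ x, ∑ i, F x i ^ 2 ∂μ) * Real.sqrt (∫ x, ∑ i, G x i ^ 2 ∂μ) := by
  set nF : X → ℝ := fun x => Real.sqrt (∑ i, F x i ^ 2) with hnF
  set nG : X → ℝ := fun x => Real.sqrt (∑ i, G x i ^ 2) with hnG
  have hmF := memL2_sqrt_sqsum hF
  have hmG := memL2_sqrt_sqsum hG
  have hptw : ∀ x, |F x ⬝ᵥ G x| ≤ nF x * nG x := by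
    intro x
    have h := Finset.sum_mul_sq_le_sq_mul_sq Finset.univ (fun i => F x i) (fun i => G x i)
    have : |F x ⬝ᵥ G x| = Real.sqrt ((F x ⬝ᵥ G x) ^ 2) := (Real.sqrt_sq_eq_abs _).symm
    rw [this, hnF, hnG, ← Real.sqrt_mul (Finset.sum_nonneg fun i _ => sq_nonneg _)]
    exact Real.sqrt_le_sqrt h
  have h1 : |∫ x, F x ⬝ᵥ G x ∂μ| ≤ ∫ x, |F x ⬝ᵥ G x| ∂μ := by
    simpa [Real.norm_eq_abs] using
      norm_integral_le_integral_norm (μ := μ) (f := fun x => F x ⬝ᵥ G x)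
  have h2 : ∫ x, |F x ⬝ᵥ G x| ∂μ ≤ ∫ x, nF x * nG x ∂μ := by
    refine integral_mono_of_nonneg (by filter_upwards with x; positivity)
      (memL1_mul hmF hmG) ?_
    filter_upwards with x; exact hptw x
  have h3 : ∫ x, nF x * nG x ∂μ ≤ Real.sqrt (∫ x, nF x ^ 2 ∂μ) * Real.sqrt (∫ x, nG x ^ 2 ∂μ) := by
    refine le_trans (le_of_eq ?_) (cs_mul hmF hmG)
    refine integral_congr_ae ?_
    filter_upwards with x
    rw [abs_of_nonneg (by positivity)]
  have e : ∀ (H : X → Fin N → ℝ), (∫ x, Real.sqrt (∑ i, H x i ^ 2) ^ 2 ∂μ)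
      = ∫ x, ∑ i, H x i ^ 2 ∂μ := by
    intro H
    refine integral_congr_ae ?_
    filter_upwards with x
    exact Real.sq_sqrt (Finset.sum_nonneg fun i _ => sq_nonneg _)
  calc |∫ x, F x ⬝ᵥ G x ∂μ| ≤ ∫ x, nF x * nG x ∂μ := h1.trans h2
    _ ≤ Real.sqrt (∫ x, nF x ^ 2 ∂μ) * Real.sqrt (∫ x, nG x ^ 2 ∂μ) := h3
    _ = _ := by rw [hnF, hnG, e F, e G]

lemma quad_sym {N : ℕ} (A : Matrix (Fin N) (Fin N) ℝ) (ξ : Fin N → ℝ) :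
    ξ ⬝ᵥ ((2⁻¹ : ℝ) • (A + Aᵀ)).mulVec ξ = ξ ⬝ᵥ A.mulVec ξ := by
  have htr : ξ ⬝ᵥ Aᵀ.mulVec ξ = ξ ⬝ᵥ A.mulVec ξ := by
    rw [dotProduct_mulVec, vecMul_transpose, dotProduct_comm]
  rw [smul_mulVec, dotProduct_smul, add_mulVec, dotProduct_add, htr, smul_eq_mul]
  ring

lemma sq_sum_single_add {N : ℕ} (i j : Fin N) (hij : i ≠ j) :
    ∑ x, ((Pi.single i 1 + Pi.single j 1 : Fin N → ℝ) x) ^ 2 = 2 := by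
  have : ∀ x, ((Pi.single i 1 + Pi.single j 1 : Fin N → ℝ) x) ^ 2
      = (if x = i then (1:ℝ) else 0) + (if x = j then 1 else 0) := by
    intro x
    simp only [Pi.add_apply, Pi.single_apply]
    rcases eq_or_ne x i with rfl | hxi <;> rcases eq_or_ne x j with rfl | hxj <;>
      simp_all
  simp only [this, Finset.sum_add_distrib, Finset.sum_ite_eq' Finset.univ,
    Finset.mem_univ, if_true]
  norm_num

lemma sq_sum_single_sub {N : ℕ} (i j : Fin N) (hij : i ≠ j) :
    ∑ x, ((Pi.single i 1 - Pi.single j 1 : Fin N → ℝ) x) ^ 2 = 2 := by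
  have : ∀ x, ((Pi.single i 1 - Pi.single j 1 : Fin N → ℝ) x) ^ 2
      = (if x = i then (1:ℝ) else 0) + (if x = j then 1 else 0) := by
    intro x
    simp only [Pi.sub_apply, Pi.single_apply]
    rcases eq_or_ne x i with rfl | hxi <;> rcases eq_or_ne x j with rfl | hxj <;>
      simp_all
  simp only [this, Finset.sum_add_distrib, Finset.sum_ite_eq' Finset.univ,
    Finset.mem_univ, if_true]
  norm_num

lemma entry_bound {N : ℕ} {β : ℝ} (S : Matrix (Fin N) (Fin N) ℝ) (hsym : Sᵀ = S)
    (h : ∀ ξ : Fin N → ℝ, 0 ≤ ξ ⬝ᵥ S.mulVec ξ ∧ ξ ⬝ᵥ S.mulVec ξ ≤ β * ∑ i, ξ i ^ 2) :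
    ∀ i j, |S i j| ≤ β := by
  have hQe : ∀ i j : Fin N, (Pi.single i (1:ℝ)) ⬝ᵥ S.mulVec (Pi.single j 1) = S i j := by
    intro i j
    rw [mulVec_single, single_dotProduct]
    simp
  intro i j
  rcases eq_or_ne i j with rfl | hij
  · have h1 := h (Pi.single i 1)
    rw [hQe i i] at h1
    have hs : ∑ x, (Pi.single i 1 : Fin N → ℝ) x ^ 2 = 1 := by
      simp [Pi.single_apply, Finset.sum_ite_eq']
    rw [hs, mul_one] at h1
    rw [abs_of_nonneg h1.1]; exact h1.2
  · have hji : S j i = S i j := by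
      conv_lhs => rw [← hsym]
      rfl
    have hu := h (Pi.single i 1 + Pi.single j 1)
    have hv := h (Pi.single i 1 - Pi.single j 1)
    have hQu : (Pi.single i (1:ℝ) + Pi.single j 1) ⬝ᵥ
        S.mulVec (Pi.single i 1 + Pi.single j 1) = S i i + S j j + 2 * S i j := by
      simp only [mulVec_add, add_dotProduct, dotProduct_add, hQe, hji]
      ring
    have hQv : (Pi.single i (1:ℝ) - Pi.single j 1) ⬝ᵥ
        S.mulVec (Pi.single i 1 - Pi.single j 1) = S i i + S j j - 2 * S i j := by
      simp only [mulVec_sub, sub_dotProduct, dotProduct_sub, hQe, hji]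
      ring
    rw [hQu, sq_sum_single_add i j hij] at hu
    rw [hQv, sq_sum_single_sub i j hij] at hv
    have hβ : 0 ≤ β := by
      have h1 := h (Pi.single i 1)
      rw [hQe i i] at h1
      have hs : ∑ x, (Pi.single i 1 : Fin N → ℝ) x ^ 2 = 1 := by
        simp [Pi.single_apply, Finset.sum_ite_eq']
      rw [hs, mul_one] at h1
      linarith [h1.1, h1.2]
    rw [abs_le]
    constructor <;> linarith [hu.1, hu.2, hv.1, hv.2]

lemma memL2_bdd_mul {b f : X → ℝ} (hb : AEStronglyMeasurable b μ) {C : ℝ}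
    (hbC : ∀ᵐ x ∂μ, |b x| ≤ C) (hf : MemLp f 2 μ) :
    MemLp (fun x => b x * f x) 2 μ := by
  have hbtop : MemLp b ⊤ μ := memLp_top_of_bound hb C (by simpa [Real.norm_eq_abs] using hbC)
  have h : (1 : ℝ≥0∞) / 2 = 1 / ⊤ + 1 / 2 := by simp
  have := hf.smul (φ := b) (r := 2) hbtop
  exact this

lemma pd_continuous {φ : (Fin N → ℝ) → ℝ} (h1 : ContDiff ℝ (⊤ : ℕ∞) φ) (i : Fin N) :
    Continuous (pd i φ) :=
  (h1.continuous_fderiv (by simp)).clm_apply continuous_const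

lemma pd_bound {φ : (Fin N → ℝ) → ℝ} (h1 : ContDiff ℝ (⊤ : ℕ∞) φ)
    (h2 : HasCompactSupport φ) :
    ∃ C : ℝ, 0 ≤ C ∧ ∀ x i, |pd i φ x| ≤ C := by
  obtain ⟨C, hC⟩ :=
    (h1.continuous_fderiv (by simp)).bounded_above_of_compact_support
      (h2.fderiv (𝕜 := ℝ))
  refine ⟨max C 0, le_max_right _ _, fun x i => ?_⟩
  have h3 : ‖(Pi.single i 1 : Fin N → ℝ)‖ ≤ 1 := by
    rw [pi_norm_le_iff_of_nonneg zero_le_one]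
    intro j
    rw [Pi.single_apply]
    split_ifs <;> simp
  calc |pd i φ x| = ‖fderiv ℝ φ x (Pi.single i 1)‖ := rfl
    _ ≤ ‖fderiv ℝ φ x‖ * ‖(Pi.single i 1 : Fin N → ℝ)‖ := (fderiv ℝ φ x).le_opNorm _
    _ ≤ C * 1 := by
        apply mul_le_mul (hC x) h3 (norm_nonneg _) ((norm_nonneg _).trans (hC x))
    _ ≤ max C 0 := by simp [le_max_left]

lemma memL2_of_bdd_cont [TopologicalSpace X] [OpensMeasurableSpace X] [IsFiniteMeasure μ]
    {f : X → ℝ} (hc : Continuous f) {C : ℝ} (hC : ∀ x, |f x| ≤ C) : MemLp f 2 μ :=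
  (memLp_top_of_bound hc.aestronglyMeasurable C
    (by filter_upwards with x using by simpa [Real.norm_eq_abs] using hC x)).mono_exponent
    le_top

lemma integrable_bdd_dot_mulVec {b : X → Fin N → ℝ}
    (hbm : ∀ i, AEStronglyMeasurable (fun x => b x i) μ) {Cb : ℝ}
    (hb : ∀ x i, |b x i| ≤ Cb) {B : X → Matrix (Fin N) (Fin N) ℝ}
    (hB : ∀ i j, MemLp (fun x => B x i j) 2 μ) {g : X → Fin N → ℝ}
    (hg : ∀ j, MemLp (fun x => g x j) 2 μ) :
    Integrable (fun x => b x ⬝ᵥ (B x).mulVec (g x)) μ := by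
  have heq : (fun x => b x ⬝ᵥ (B x).mulVec (g x))
      = fun x => ∑ i, b x i * ∑ j, B x i j * g x j := by
    funext x; simp [dotProduct, Matrix.mulVec]
  rw [heq]
  refine integrable_finset_sum _ fun i _ => ?_
  refine Integrable.bdd_mul (integrable_finset_sum _ fun j _ => memL1_mul (hB i j) (hg j))
    (hbm i) (.of_forall fun x => by simpa [Real.norm_eq_abs] using hb x i)

end Helpers
/-- stability of weak solutions: if admissible `A_k` (elliptic
symmetric parts, bounded skew parts) converge strongly in `L²` to `A₀`, and
`y_k` are the corresponding weak solutions of `−div(A_k∇y_k) = f`, then `{y_k}`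
is bounded in `H¹₀(Ω)`, and any weak `H¹₀`-limit `ŷ` of a subsequence solves
the limit equation `−div(A₀∇ŷ) = f`. -/
theorem statement19 {N : ℕ} (hN : 2 ≤ N) (Ω : Set (Fin N → ℝ)) (hΩo : IsOpen Ω)
    (hΩb : Bornology.IsBounded Ω) (α β : ℝ) (hα : 0 < α) (hαβ : α ≤ β)
    -- `f ∈ H⁻¹(Ω)`
    (Λ : ((Fin N → ℝ) → ℝ) → ℝ) (Cf : ℝ)
    (hΛ : ∀ φ, TestFun Ω φ →
      |Λ φ| ≤ Cf * Real.sqrt (∫ x in Ω, ∑ i, (pd i φ x) ^ 2))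
    (Ak : ℕ → (Fin N → ℝ) → Matrix (Fin N) (Fin N) ℝ)
    (A₀ : (Fin N → ℝ) → Matrix (Fin N) (Fin N) ℝ)
    (hL2 : ∀ i j, MemLp (fun x => A₀ x i j) 2 (volume.restrict Ω))
    (hkL2 : ∀ k i j, MemLp (fun x => Ak k x i j) 2 (volume.restrict Ω))
    (hell : ∀ k, ∀ᵐ x ∂(volume.restrict Ω), ∀ ξ : Fin N → ℝ,
      α * (∑ i, ξ i ^ 2) ≤
        dotProduct ξ (((2⁻¹ : ℝ) • (Ak k x + (Ak k x)ᵀ)).mulVec ξ) ∧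
      dotProduct ξ (((2⁻¹ : ℝ) • (Ak k x + (Ak k x)ᵀ)).mulVec ξ) ≤
        β * (∑ i, ξ i ^ 2))
    (hskewbd : ∀ k, ∃ C : ℝ, ∀ᵐ x ∂(volume.restrict Ω), ∀ i j,
      |((2⁻¹ : ℝ) • (Ak k x - (Ak k x)ᵀ)) i j| ≤ C)
    (hstrong : Tendsto
      (fun k => ∫ x in Ω, ∑ i, ∑ j, (Ak k x i j - A₀ x i j) ^ 2) atTop (𝓝 0))
    (yk : ℕ → (Fin N → ℝ) → ℝ) (gk : ℕ → (Fin N → ℝ) → Fin N → ℝ)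
    (hyk : ∀ k, MemH10 Ω (yk k) (gk k))
    (hsol : ∀ k, ∀ φ, TestFun Ω φ →
      ∫ x in Ω, dotProduct (gradv φ x) ((Ak k x).mulVec (gk k x)) = Λ φ) :
    -- boundedness in H¹₀
    (∃ M : ℝ, ∀ k, ∫ x in Ω, ∑ i, (gk k x i) ^ 2 ≤ M) ∧
    -- any weak H¹₀-limit of a subsequence solves the limit equation
    ∀ (yh : (Fin N → ℝ) → ℝ) (gh : (Fin N → ℝ) → Fin N → ℝ) (ns : ℕ → ℕ),
      StrictMono ns → MemH10 Ω yh gh →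
      (∀ h : (Fin N → ℝ) → Fin N → ℝ,
        (∀ i, MemLp (fun x => h x i) 2 (volume.restrict Ω)) →
        Tendsto (fun k => ∫ x in Ω, dotProduct (gk (ns k) x) (h x)) atTop
          (𝓝 (∫ x in Ω, dotProduct (gh x) (h x)))) →
      (∀ w : (Fin N → ℝ) → ℝ, MemLp w 2 (volume.restrict Ω) →
        Tendsto (fun k => ∫ x in Ω, yk (ns k) x * w x) atTop
          (𝓝 (∫ x in Ω, yh x * w x))) →
      ∀ φ, TestFun Ω φ →
        ∫ x in Ω, dotProduct (gradv φ x) ((A₀ x).mulVec (gh x)) = Λ φ := by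
  haveI hfin : IsFiniteMeasure (volume.restrict Ω) :=
    ⟨by rw [Measure.restrict_apply_univ]; exact hΩb.measure_lt_top⟩
  -- a.e. entrywise bounds on the matrices `Ak k`
  have hAkbd : ∀ k, ∃ C : ℝ, 0 ≤ C ∧ ∀ᵐ x ∂(volume.restrict Ω), ∀ i j, |Ak k x i j| ≤ C := by
    intro k
    obtain ⟨Cs, hCs⟩ := hskewbd k
    refine ⟨β + max Cs 0, by
      have hb : (0:ℝ) ≤ β := by linarith
      have hm : (0:ℝ) ≤ max Cs 0 := le_max_right _ _
      linarith, ?_⟩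
    filter_upwards [hell k, hCs] with x hx hskew
    intro i j
    have hsymS : (((2⁻¹ : ℝ) • (Ak k x + (Ak k x)ᵀ)))ᵀ = (2⁻¹ : ℝ) • (Ak k x + (Ak k x)ᵀ) := by
      rw [transpose_smul, transpose_add, transpose_transpose, add_comm]
    have hsb := entry_bound ((2⁻¹ : ℝ) • (Ak k x + (Ak k x)ᵀ)) hsymS
      (fun ξ => ⟨le_trans (by positivity) (hx ξ).1, (hx ξ).2⟩) i j
    have hdecomp : Ak k x i j = ((2⁻¹ : ℝ) • (Ak k x + (Ak k x)ᵀ)) i j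
        + ((2⁻¹ : ℝ) • (Ak k x - (Ak k x)ᵀ)) i j := by
      simp only [Matrix.smul_apply, Matrix.add_apply, Matrix.sub_apply, smul_eq_mul]
      ring
    calc |Ak k x i j| ≤ |((2⁻¹ : ℝ) • (Ak k x + (Ak k x)ᵀ)) i j|
          + |((2⁻¹ : ℝ) • (Ak k x - (Ak k x)ᵀ)) i j| := by
          rw [hdecomp]; exact abs_add_le _ _
      _ ≤ β + max Cs 0 := add_le_add hsb ((hskew i j).trans (le_max_left _ _))
  -- Part 1 : the energy bound
  have part1 : ∀ k, ∫ x in Ω, ∑ i, (gk k x i) ^ 2 ≤ (Cf / α) ^ 2 := by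
    intro k
    obtain ⟨hy2, hg2, φs, hφt, hφconv⟩ := hyk k
    obtain ⟨C, hC0, hCae⟩ := hAkbd k
    have hAg : ∀ i, MemLp (fun x => ((Ak k x).mulVec (gk k x)) i) 2 (volume.restrict Ω) := by
      intro i
      have heq : (fun x => ((Ak k x).mulVec (gk k x)) i)
          = fun x => ∑ j, Ak k x i j * gk k x j := by
        funext x; simp [Matrix.mulVec, dotProduct]
      rw [heq]
      refine memLp_finset_sum _ fun j _ => ?_
      refine memL2_bdd_mul (C := C) (hkL2 k i j).1 ?_ (hg2 j)
      filter_upwards [hCae] with x hx using hx i j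
    have hφmem : ∀ m, MemLp (φs m) 2 (volume.restrict Ω) := by
      intro m
      obtain ⟨Cm, hCm⟩ := ((hφt m).1.continuous).bounded_above_of_compact_support (hφt m).2.1
      exact memL2_of_bdd_cont (hφt m).1.continuous
        (fun x => by simpa [Real.norm_eq_abs] using hCm x)
    have hpdmem : ∀ m i, MemLp (pd i (φs m)) 2 (volume.restrict Ω) := by
      intro m i
      obtain ⟨C', hC'0, hC'⟩ := pd_bound (hφt m).1 (hφt m).2.1
      exact memL2_of_bdd_cont (pd_continuous (hφt m).1 i) (fun x => hC' x i)
    have hdiffmem : ∀ m i, MemLp (fun x => pd i (φs m) x - gk k x i) 2 (volume.restrict Ω) := by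
      intro m i
      exact (hpdmem m i).sub (hg2 i)
    set E := ∫ x in Ω, ∑ i, (gk k x i) ^ 2 with hEdef
    have hE0 : 0 ≤ E :=
      integral_nonneg fun x => Finset.sum_nonneg fun i _ => sq_nonneg _
    set Q := ∫ x in Ω, gk k x ⬝ᵥ (Ak k x).mulVec (gk k x) with hQdef
    set ε : ℕ → ℝ := fun m => ∫ x in Ω, ∑ i, (pd i (φs m) x - gk k x i) ^ 2 with hεdef
    have hε0 : ∀ m, 0 ≤ ε m := fun m =>
      integral_nonneg fun x => Finset.sum_nonneg fun i _ => sq_nonneg _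
    have hεconv : Tendsto ε atTop (𝓝 0) := by
      refine tendsto_of_tendsto_of_tendsto_of_le_of_le tendsto_const_nhds hφconv hε0 ?_
      intro m
      refine integral_mono
        (integrable_finset_sum _ fun i _ => (hdiffmem m i).integrable_sq)
        (((( hφmem m).sub hy2).integrable_sq).add
          (integrable_finset_sum _ fun i _ => (hdiffmem m i).integrable_sq)) ?_
      intro x
      have := sq_nonneg (φs m x - yk k x)
      simp only [Pi.add_apply]
      nlinarith [Finset.sum_nonneg (fun i (_ : i ∈ Finset.univ) =>
        sq_nonneg (pd i (φs m) x - gk k x i))]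
    have hT : ∀ m, ∫ x in Ω, gradv (φs m) x ⬝ᵥ (Ak k x).mulVec (gk k x) = Λ (φs m) :=
      fun m => hsol k (φs m) (hφt m)
    have hTQsub : ∀ m, (∫ x in Ω, gradv (φs m) x ⬝ᵥ (Ak k x).mulVec (gk k x)) - Q
        = ∫ x in Ω, (fun j => pd j (φs m) x - gk k x j) ⬝ᵥ (Ak k x).mulVec (gk k x) := by
      intro m
      rw [hQdef, ← integral_sub
        (integrable_dot (F := fun x => gradv (φs m) x)
          (G := fun x => (Ak k x).mulVec (gk k x)) (fun i => hpdmem m i) hAg)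
        (integrable_dot (F := fun x => gk k x)
          (G := fun x => (Ak k x).mulVec (gk k x)) hg2 hAg)]
      refine integral_congr_ae (.of_forall fun x => ?_)
      show gradv (φs m) x ⬝ᵥ (Ak k x).mulVec (gk k x)
          - gk k x ⬝ᵥ (Ak k x).mulVec (gk k x)
          = (fun j => pd j (φs m) x - gk k x j) ⬝ᵥ (Ak k x).mulVec (gk k x)
      rw [show (fun j => pd j (φs m) x - gk k x j) = gradv (φs m) x - gk k x from rfl,
        sub_dotProduct]
    have hTtendsQ : Tendsto (fun m => ∫ x in Ω, gradv (φs m) x ⬝ᵥ (Ak k x).mulVec (gk k x))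
        atTop (𝓝 Q) := by
      rw [← tendsto_sub_nhds_zero_iff]
      apply squeeze_zero_norm (a := fun m => Real.sqrt (ε m)
        * Real.sqrt (∫ x in Ω, ∑ i, ((Ak k x).mulVec (gk k x)) i ^ 2))
      · intro m
        rw [Real.norm_eq_abs, hTQsub m]
        exact cs_dot (fun i => hdiffmem m i) hAg
      · have h1 : Tendsto (fun m => Real.sqrt (ε m)) atTop (𝓝 0) := by
          have := (Real.continuous_sqrt.tendsto 0).comp hεconv
          simpa [Real.sqrt_zero, Function.comp_def] using this
        simpa using h1.mul_const _
    set c : ℕ → ℝ := fun m => ∫ x in Ω, (fun j => pd j (φs m) x - gk k x j) ⬝ᵥ gk k x with hcdef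
    have hc0 : Tendsto c atTop (𝓝 0) := by
      apply squeeze_zero_norm (a := fun m => Real.sqrt (ε m) * Real.sqrt E)
      · intro m
        rw [Real.norm_eq_abs]
        exact cs_dot (fun i => hdiffmem m i) hg2
      · have h1 : Tendsto (fun m => Real.sqrt (ε m)) atTop (𝓝 0) := by
          have := (Real.continuous_sqrt.tendsto 0).comp hεconv
          simpa [Real.sqrt_zero, Function.comp_def] using this
        simpa using h1.mul_const _
    set s : ℕ → ℝ := fun m => ∫ x in Ω, ∑ i, pd i (φs m) x ^ 2 with hsdef
    have hsdecomp : ∀ m, s m = ε m + 2 * c m + E := by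
      intro m
      have hx : ∀ x, ∑ i, pd i (φs m) x ^ 2
          = ((∑ i, (pd i (φs m) x - gk k x i) ^ 2)
            + 2 * ((fun j => pd j (φs m) x - gk k x j) ⬝ᵥ gk k x))
            + ∑ i, gk k x i ^ 2 := by
        intro x
        simp only [dotProduct, Finset.mul_sum, ← Finset.sum_add_distrib]
        exact Finset.sum_congr rfl fun i _ => by ring
      have hint1 : Integrable (fun x => ∑ i, (pd i (φs m) x - gk k x i) ^ 2)
          (volume.restrict Ω) := integrable_finset_sum _ fun i _ => (hdiffmem m i).integrable_sq
      have hint2 : Integrable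
          (fun x => 2 * ((fun j => pd j (φs m) x - gk k x j) ⬝ᵥ gk k x))
          (volume.restrict Ω) := (integrable_dot (fun i => hdiffmem m i) hg2).const_mul 2
      have hint3 : Integrable (fun x => ∑ i, gk k x i ^ 2) (volume.restrict Ω) :=
        integrable_finset_sum _ fun i _ => (hg2 i).integrable_sq
      rw [hsdef]
      calc (∫ x in Ω, ∑ i, pd i (φs m) x ^ 2)
          = ∫ x in Ω, (((∑ i, (pd i (φs m) x - gk k x i) ^ 2)
            + 2 * ((fun j => pd j (φs m) x - gk k x j) ⬝ᵥ gk k x))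
            + ∑ i, gk k x i ^ 2) := integral_congr_ae (.of_forall hx)
        _ = ε m + 2 * c m + E := by
            rw [integral_add
                (f := fun x => (∑ i, (pd i (φs m) x - gk k x i) ^ 2)
                  + 2 * ((fun j => pd j (φs m) x - gk k x j) ⬝ᵥ gk k x))
                (g := fun x => ∑ i, gk k x i ^ 2) (hint1.add hint2) hint3,
              integral_add hint1 hint2, integral_const_mul]
    have hsconv : Tendsto s atTop (𝓝 E) := by
      have : Tendsto (fun m => ε m + 2 * c m + E) atTop (𝓝 (0 + 2 * 0 + E)) :=
        (hεconv.add (hc0.const_mul 2)).add tendsto_const_nhds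
      rw [show (0:ℝ) + 2 * 0 + E = E by ring] at this
      exact this.congr fun m => (hsdecomp m).symm
    have hQle : Q ≤ Cf * Real.sqrt E := by
      have hlim2 : Tendsto (fun m => Cf * Real.sqrt (s m)) atTop (𝓝 (Cf * Real.sqrt E)) :=
        (((Real.continuous_sqrt.tendsto E).comp hsconv)).const_mul Cf
      refine le_of_tendsto_of_tendsto' hTtendsQ hlim2 fun m => ?_
      calc (∫ x in Ω, gradv (φs m) x ⬝ᵥ (Ak k x).mulVec (gk k x)) = Λ (φs m) := hT m
        _ ≤ |Λ (φs m)| := le_abs_self _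
        _ ≤ Cf * Real.sqrt (s m) := hΛ (φs m) (hφt m)
    have hαE : α * E ≤ Q := by
      have hint1 : Integrable (fun x => α * ∑ i, gk k x i ^ 2) (volume.restrict Ω) :=
        (integrable_finset_sum _ fun i _ => (hg2 i).integrable_sq).const_mul α
      have hint2 : Integrable (fun x => gk k x ⬝ᵥ (Ak k x).mulVec (gk k x))
          (volume.restrict Ω) := integrable_dot hg2 hAg
      have hae : ∀ᵐ x ∂(volume.restrict Ω),
          α * ∑ i, gk k x i ^ 2 ≤ gk k x ⬝ᵥ (Ak k x).mulVec (gk k x) := by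
        filter_upwards [hell k] with x hx
        have h := (hx (gk k x)).1
        rwa [quad_sym] at h
      calc α * E = ∫ x in Ω, α * ∑ i, gk k x i ^ 2 := (integral_const_mul _ _).symm
        _ ≤ Q := integral_mono_ae hint1 hint2 hae
    have hall : α * E ≤ Cf * Real.sqrt E := hαE.trans hQle
    rcases hE0.lt_or_eq with hpos | heq
    · have hsp : 0 < Real.sqrt E := Real.sqrt_pos.2 hpos
      have h1 : α * Real.sqrt E ≤ Cf := by
        have h2 : α * (Real.sqrt E * Real.sqrt E) ≤ Cf * Real.sqrt E := by
          rwa [Real.mul_self_sqrt hE0]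
        rw [← mul_assoc] at h2
        exact le_of_mul_le_mul_right h2 hsp
      have h2 : Real.sqrt E ≤ Cf / α := (le_div_iff₀ hα).2 (by linarith [h1])
      calc E = Real.sqrt E ^ 2 := (Real.sq_sqrt hE0).symm
        _ ≤ (Cf / α) ^ 2 := pow_le_pow_left₀ (Real.sqrt_nonneg _) h2 2
    · rw [← heq]; positivity
  refine ⟨⟨(Cf / α) ^ 2, part1⟩, ?_⟩
  rintro yh gh ns hns ⟨hyh2, hgh2, -⟩ hw hwy φ hφ
  obtain ⟨Cφ, hCφ0, hCφ⟩ := pd_bound hφ.1 hφ.2.1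
  have hpdφ : ∀ i, MemLp (pd i φ) 2 (volume.restrict Ω) :=
    fun i => memL2_of_bdd_cont (pd_continuous hφ.1 i) (fun x => hCφ x i)
  have hgk2 : ∀ k i, MemLp (fun x => gk k x i) 2 (volume.restrict Ω) :=
    fun k => (hyk k).2.1
  -- the fixed test vector field `h = ∇φ ᵥ* A₀`
  set h : (Fin N → ℝ) → Fin N → ℝ := fun x => (gradv φ x) ᵥ* (A₀ x) with hh
  have hhcomp : ∀ j, MemLp (fun x => h x j) 2 (volume.restrict Ω) := by
    intro j
    have heq : (fun x => h x j) = fun x => ∑ i, pd i φ x * A₀ x i j := by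
      funext x; simp [hh, Matrix.vecMul, dotProduct, gradv]
    rw [heq]
    exact memLp_finset_sum _ fun i _ => memL2_bdd_mul (C := Cφ)
      (pd_continuous hφ.1 i).aestronglyMeasurable (.of_forall fun x => hCφ x i) (hL2 i j)
  have hdotid : ∀ (B : Matrix (Fin N) (Fin N) ℝ) (w : Fin N → ℝ) (x : Fin N → ℝ),
      gradv φ x ⬝ᵥ B.mulVec w = w ⬝ᵥ (gradv φ x ᵥ* B) := by
    intro B w x; rw [dotProduct_mulVec, dotProduct_comm]
  -- convergence of the `A₀`-part
  have hwk : Tendsto (fun k => ∫ x in Ω, gradv φ x ⬝ᵥ (A₀ x).mulVec (gk (ns k) x)) atTop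
      (𝓝 (∫ x in Ω, gradv φ x ⬝ᵥ (A₀ x).mulVec (gh x))) := by
    have e1 : ∀ g' : (Fin N → ℝ) → Fin N → ℝ,
        (∫ x in Ω, gradv φ x ⬝ᵥ (A₀ x).mulVec (g' x)) = ∫ x in Ω, g' x ⬝ᵥ h x := by
      intro g'
      exact integral_congr_ae (.of_forall fun x => hdotid (A₀ x) (g' x) x)
    have hcv := hw h hhcomp
    rw [← e1 gh] at hcv
    exact hcv.congr fun k => (e1 (gk (ns k))).symm
  -- the difference part tends to zero
  set M : ℝ := (Cf / α) ^ 2 with hM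
  have hM0 : 0 ≤ M := by positivity
  set δ : ℕ → ℝ := fun k => ∫ x in Ω, ∑ i, ∑ j, (Ak (ns k) x i j - A₀ x i j) ^ 2 with hδ
  have hδconv : Tendsto δ atTop (𝓝 0) := hstrong.comp hns.tendsto_atTop
  have hDmem : ∀ k i j, MemLp (fun x => Ak (ns k) x i j - A₀ x i j) 2 (volume.restrict Ω) :=
    fun k i j => (hkL2 (ns k) i j).sub (hL2 i j)
  have hδ0 : ∀ k, 0 ≤ δ k := fun k =>
    integral_nonneg fun x => Finset.sum_nonneg fun i _ => Finset.sum_nonneg fun j _ => sq_nonneg _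
  have hδij : ∀ k i j, ∫ x in Ω, (Ak (ns k) x i j - A₀ x i j) ^ 2 ≤ δ k := by
    intro k i j
    refine integral_mono ((hDmem k i j).integrable_sq)
      (integrable_finset_sum _ fun i' _ => integrable_finset_sum _ fun j' _ =>
        (hDmem k i' j').integrable_sq) ?_
    intro x
    calc (Ak (ns k) x i j - A₀ x i j) ^ 2
        ≤ ∑ j', (Ak (ns k) x i j' - A₀ x i j') ^ 2 :=
          Finset.single_le_sum (f := fun j' => (Ak (ns k) x i j' - A₀ x i j') ^ 2)
            (fun j' _ => sq_nonneg _) (Finset.mem_univ j)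
      _ ≤ ∑ i', ∑ j', (Ak (ns k) x i' j' - A₀ x i' j') ^ 2 :=
          Finset.single_le_sum
            (f := fun i' => ∑ j', (Ak (ns k) x i' j' - A₀ x i' j') ^ 2)
            (fun i' _ => Finset.sum_nonneg fun j' _ => sq_nonneg _) (Finset.mem_univ i)
  have hgjb : ∀ k j, ∫ x in Ω, gk (ns k) x j ^ 2 ≤ M := by
    intro k j
    refine le_trans ?_ (part1 (ns k))
    refine integral_mono ((hgk2 (ns k) j).integrable_sq)
      (integrable_finset_sum _ fun i _ => (hgk2 (ns k) i).integrable_sq) ?_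
    intro x
    exact Finset.single_le_sum (f := fun i => gk (ns k) x i ^ 2)
      (fun i _ => sq_nonneg _) (Finset.mem_univ j)
  -- integrability of the two dot-product pieces
  have hbm : ∀ i, AEStronglyMeasurable (fun x => gradv φ x i) (volume.restrict Ω) :=
    fun i => (pd_continuous hφ.1 i).aestronglyMeasurable
  have hCφ' : ∀ (x : Fin N → ℝ) (i : Fin N), |gradv φ x i| ≤ Cφ := fun x i => hCφ x i
  have hintD : ∀ k, Integrable
      (fun x => gradv φ x ⬝ᵥ ((Ak (ns k) x - A₀ x).mulVec (gk (ns k) x)))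
      (volume.restrict Ω) := by
    intro k
    have := integrable_bdd_dot_mulVec (μ := volume.restrict Ω) hbm hCφ'
      (B := fun x => Ak (ns k) x - A₀ x)
      (fun i j => by simpa [Matrix.sub_apply] using hDmem k i j) (hgk2 (ns k))
    exact this
  have hintA₀ : ∀ k, Integrable
      (fun x => gradv φ x ⬝ᵥ ((A₀ x).mulVec (gk (ns k) x))) (volume.restrict Ω) :=
    fun k => integrable_bdd_dot_mulVec (μ := volume.restrict Ω) hbm hCφ' hL2 (hgk2 (ns k))
  -- bound on the difference part
  set v : ℕ → ℝ := fun k =>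
    ∫ x in Ω, gradv φ x ⬝ᵥ ((Ak (ns k) x - A₀ x).mulVec (gk (ns k) x)) with hv
  have hvbd : ∀ k, ‖v k‖ ≤ Cφ * (N * (N * (Real.sqrt (δ k) * Real.sqrt M))) := by
    intro k
    have habs : ‖v k‖ ≤ ∫ x in Ω,
        |gradv φ x ⬝ᵥ ((Ak (ns k) x - A₀ x).mulVec (gk (ns k) x))| := by
      simpa [Real.norm_eq_abs] using norm_integral_le_integral_norm (μ := volume.restrict Ω)
        (f := fun x => gradv φ x ⬝ᵥ ((Ak (ns k) x - A₀ x).mulVec (gk (ns k) x)))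
    have hintabs : ∀ i j, Integrable
        (fun x => |(Ak (ns k) x i j - A₀ x i j) * gk (ns k) x j|) (volume.restrict Ω) :=
      fun i j => (memL1_mul (hDmem k i j) (hgk2 (ns k) j)).abs
    have hstep2 : (∫ x in Ω,
        |gradv φ x ⬝ᵥ ((Ak (ns k) x - A₀ x).mulVec (gk (ns k) x))|)
        ≤ ∫ x in Ω, Cφ * ∑ i, ∑ j, |(Ak (ns k) x i j - A₀ x i j) * gk (ns k) x j| := by
      refine integral_mono
        (f := fun x => |gradv φ x ⬝ᵥ ((Ak (ns k) x - A₀ x).mulVec (gk (ns k) x))|)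
        (g := fun x => Cφ * ∑ i, ∑ j, |(Ak (ns k) x i j - A₀ x i j) * gk (ns k) x j|)
        ((hintD k).abs)
        ((integrable_finset_sum _ fun i _ =>
          integrable_finset_sum _ fun j _ => hintabs i j).const_mul Cφ) ?_
      intro x
      show |gradv φ x ⬝ᵥ ((Ak (ns k) x - A₀ x).mulVec (gk (ns k) x))|
        ≤ Cφ * ∑ i, ∑ j, |(Ak (ns k) x i j - A₀ x i j) * gk (ns k) x j|
      have e1 : gradv φ x ⬝ᵥ ((Ak (ns k) x - A₀ x).mulVec (gk (ns k) x))
          = ∑ i, gradv φ x i * ∑ j, (Ak (ns k) x i j - A₀ x i j) * gk (ns k) x j := by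
        simp [dotProduct, Matrix.mulVec, Matrix.sub_apply]
      rw [e1]
      calc |∑ i, gradv φ x i * ∑ j, (Ak (ns k) x i j - A₀ x i j) * gk (ns k) x j|
          ≤ ∑ i, |gradv φ x i * ∑ j, (Ak (ns k) x i j - A₀ x i j) * gk (ns k) x j| :=
            Finset.abs_sum_le_sum_abs _ _
        _ ≤ ∑ i, Cφ * ∑ j, |(Ak (ns k) x i j - A₀ x i j) * gk (ns k) x j| := by
            refine Finset.sum_le_sum fun i _ => ?_
            rw [abs_mul]
            refine mul_le_mul (hCφ x i) (Finset.abs_sum_le_sum_abs _ _) (abs_nonneg _) hCφ0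
        _ = Cφ * ∑ i, ∑ j, |(Ak (ns k) x i j - A₀ x i j) * gk (ns k) x j| := by
            rw [Finset.mul_sum]
    have hstep3 : (∫ x in Ω, Cφ * ∑ i, ∑ j, |(Ak (ns k) x i j - A₀ x i j) * gk (ns k) x j|)
        = Cφ * ∑ i, ∑ j, ∫ x in Ω, |(Ak (ns k) x i j - A₀ x i j) * gk (ns k) x j| := by
      rw [integral_const_mul]
      congr 1
      rw [integral_finset_sum _ fun i _ =>
        integrable_finset_sum _ fun j _ => hintabs i j]
      exact Finset.sum_congr rfl fun i _ =>
        integral_finset_sum _ fun j _ => hintabs i j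
    have hstep4 : ∀ i j, (∫ x in Ω, |(Ak (ns k) x i j - A₀ x i j) * gk (ns k) x j|)
        ≤ Real.sqrt (δ k) * Real.sqrt M := by
      intro i j
      refine le_trans (cs_mul (hDmem k i j) (hgk2 (ns k) j)) ?_
      exact mul_le_mul (Real.sqrt_le_sqrt (hδij k i j)) (Real.sqrt_le_sqrt (hgjb k j))
        (Real.sqrt_nonneg _) (Real.sqrt_nonneg _)
    calc ‖v k‖ ≤ ∫ x in Ω, Cφ * ∑ i, ∑ j, |(Ak (ns k) x i j - A₀ x i j) * gk (ns k) x j| :=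
          habs.trans hstep2
      _ = Cφ * ∑ i, ∑ j, ∫ x in Ω, |(Ak (ns k) x i j - A₀ x i j) * gk (ns k) x j| := hstep3
      _ ≤ Cφ * (N * (N * (Real.sqrt (δ k) * Real.sqrt M))) := by
          refine mul_le_mul_of_nonneg_left ?_ hCφ0
          calc (∑ i, ∑ j, ∫ x in Ω, |(Ak (ns k) x i j - A₀ x i j) * gk (ns k) x j|)
              ≤ ∑ _i : Fin N, ∑ _j : Fin N, Real.sqrt (δ k) * Real.sqrt M :=
                Finset.sum_le_sum fun i _ => Finset.sum_le_sum fun j _ => hstep4 i j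
            _ = N * (N * (Real.sqrt (δ k) * Real.sqrt M)) := by
                simp [Finset.sum_const, Finset.card_univ, mul_assoc]
      _ = Cφ * (N * (N * (Real.sqrt (δ k) * Real.sqrt M))) := rfl
  have hv0 : Tendsto v atTop (𝓝 0) := by
    refine squeeze_zero_norm hvbd ?_
    have h1 : Tendsto (fun k => Real.sqrt (δ k)) atTop (𝓝 0) := by
      have := (Real.continuous_sqrt.tendsto 0).comp hδconv
      simpa [Real.sqrt_zero, Function.comp_def] using this
    have h2 : Tendsto (fun k => Cφ * ((N:ℝ) * ((N:ℝ) * (Real.sqrt (δ k) * Real.sqrt M))))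
        atTop (𝓝 (Cφ * ((N:ℝ) * ((N:ℝ) * (0 * Real.sqrt M))))) :=
      (((h1.mul_const _).const_mul _).const_mul _).const_mul _
    simpa using h2
  -- splitting the solution identity
  have hsplit : ∀ k, Λ φ = v k
      + ∫ x in Ω, gradv φ x ⬝ᵥ (A₀ x).mulVec (gk (ns k) x) := by
    intro k
    have e1 : ∀ x, gradv φ x ⬝ᵥ (Ak (ns k) x).mulVec (gk (ns k) x)
        = gradv φ x ⬝ᵥ ((Ak (ns k) x - A₀ x).mulVec (gk (ns k) x))
          + gradv φ x ⬝ᵥ ((A₀ x).mulVec (gk (ns k) x)) := by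
      intro x
      rw [← dotProduct_add, ← Matrix.add_mulVec, sub_add_cancel]
    calc Λ φ = ∫ x in Ω, gradv φ x ⬝ᵥ (Ak (ns k) x).mulVec (gk (ns k) x) :=
          (hsol (ns k) φ hφ).symm
      _ = ∫ x in Ω, (gradv φ x ⬝ᵥ ((Ak (ns k) x - A₀ x).mulVec (gk (ns k) x))
          + gradv φ x ⬝ᵥ ((A₀ x).mulVec (gk (ns k) x))) :=
          integral_congr_ae (.of_forall e1)
      _ = v k + ∫ x in Ω, gradv φ x ⬝ᵥ (A₀ x).mulVec (gk (ns k) x) :=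
          integral_add (hintD k) (hintA₀ k)
  have hfinal : Tendsto (fun k => v k
      + ∫ x in Ω, gradv φ x ⬝ᵥ (A₀ x).mulVec (gk (ns k) x)) atTop
      (𝓝 (0 + ∫ x in Ω, gradv φ x ⬝ᵥ (A₀ x).mulVec (gh x))) := hv0.add hwk
  have hconst : Tendsto (fun _ : ℕ => Λ φ) atTop
      (𝓝 (0 + ∫ x in Ω, gradv φ x ⬝ᵥ (A₀ x).mulVec (gh x))) :=
    hfinal.congr fun k => (hsplit k).symm
  have := tendsto_nhds_unique hconst tendsto_const_nhds
  rw [zero_add] at this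
  exact this
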